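/- arXiv:1710.10029 — 7 statements merged into one kernel-verified Lean document; each statement's English description precedes it below -/
import Mathlib

section
/- Let A be a commutative ring and I an ideal of A. Then for any b ∈ A, (I +̂ b) ∩ (I : b) ⊆ √I, where (I +̂ b) := ⋂_{a ∈ (I : b^∞)} (I : a^∞). Consequently, if I is radical then I = (I +̂ b) ∩ (I : b). -/
/-- For an ideal `I` of a commutative ring `A` and `b ∈ A`, with
`(I +̂ b) = ⋂_{a ∈ (I : b^∞)} (I : a^∞)`, we have `(I +̂ b) ∩ (I : b) ⊆ √I`;
consequently, if `I` is radical then `I = (I +̂ b) ∩ (I : b)`. -/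
theorem stmt3 {A : Type*} [CommRing A] (I : Ideal A) (b : A) :
    ((⋂ a ∈ {a : A | ∃ n : ℕ, a * b ^ n ∈ I}, {x : A | ∃ m : ℕ, x * a ^ m ∈ I}) ∩
        {x : A | x * b ∈ I} ⊆ {x : A | ∃ n : ℕ, x ^ n ∈ I}) ∧
      (I.radical = I →
        (I : Set A) =
          (⋂ a ∈ {a : A | ∃ n : ℕ, a * b ^ n ∈ I}, {x : A | ∃ m : ℕ, x * a ^ m ∈ I}) ∩
            {x : A | x * b ∈ I}) := by
  have h1 : (⋂ a ∈ {a : A | ∃ n : ℕ, a * b ^ n ∈ I}, {x : A | ∃ m : ℕ, x * a ^ m ∈ I}) ∩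
        {x : A | x * b ∈ I} ⊆ {x : A | ∃ n : ℕ, x ^ n ∈ I} := by
    rintro x ⟨hx1, hx2⟩
    have hxb : x ∈ {a : A | ∃ n : ℕ, a * b ^ n ∈ I} := ⟨1, by simpa using hx2⟩
    obtain ⟨m, hm⟩ := Set.mem_iInter₂.mp hx1 x hxb
    exact ⟨m + 1, by rwa [pow_succ']⟩
  refine ⟨h1, fun hrad => Set.Subset.antisymm ?_ ?_⟩
  · intro x hx
    refine ⟨Set.mem_iInter₂.mpr fun a _ => ⟨1, ?_⟩, ?_⟩
    · simpa using I.mul_mem_right a hx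
    · exact I.mul_mem_right b hx
  · intro x hx
    obtain ⟨n, hn⟩ := h1 hx
    have : x ∈ I.radical := ⟨n, hn⟩
    rwa [hrad] at this
end

section
/- Let A be a commutative Poisson algebra over a field of characteristic zero and I a Poisson ideal of A. Then the radical √I is a Poisson ideal. -/
/-- If `A` is a commutative Poisson algebra over a characteristic-zero field `k`
and `I` is a Poisson ideal of `A`, then the radical `√I` is a Poisson ideal. -/
theorem stmt6 {k A : Type*} [Field k] [CharZero k] [CommRing A] [Algebra k A]
    (P : A → A → A)
    (hlin₁ : ∀ a : A, IsLinearMap k (P a))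
    (hlin₂ : ∀ b : A, IsLinearMap k (fun a => P a b))
    (hanti : ∀ a b : A, P a b = -P b a)
    (hjac : ∀ a b c : A, P a (P b c) = P (P a b) c + P b (P a c))
    (hleib : ∀ a b c : A, P a (b * c) = P a b * c + b * P a c)
    (I : Ideal A) (hI : ∀ x ∈ I, ∀ a : A, P a x ∈ I) :
    ∀ x ∈ I.radical, ∀ a : A, P a x ∈ I.radical := by
  intro x hx a
  obtain ⟨n, hn⟩ := hx
  set y := P a x with hy
  -- P a 1 = 0
  have hP1 : P a 1 = 0 := by
    have := hleib a 1 1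
    simp only [mul_one] at this
    linear_combination (-1 : A) * this
  -- power rule (shifted form, valid for all exponents)
  have hpow : ∀ (w : A) (m : ℕ), P a (w ^ (m + 1)) = (m + 1 : ℕ) * (w ^ m * P a w) := by
    intro w m
    induction m with
    | zero => simp
    | succ m ih =>
      rw [pow_succ, hleib, ih]
      push_cast
      ring
  have hpow' : ∀ (w : A) (m : ℕ), P a (w ^ m) * w = (m : ℕ) * (w ^ m * P a w) := by
    intro w m
    cases m with
    | zero => simp [hP1]
    | succ m =>
      rw [hpow w m, pow_succ]
      push_cast
      ring
  -- cancellation of nonzero natural coefficients (char zero)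
  have hc : ∀ (c : ℕ) (z : A), c ≠ 0 → (c : A) * z ∈ I → z ∈ I := by
    intro c z hc0 h
    have h2 := I.mul_mem_left (algebraMap k A ((c : k)⁻¹)) h
    have : algebraMap k A ((c : k)⁻¹) * ((c : A) * z) = z := by
      rw [← mul_assoc, ← map_natCast (algebraMap k A) c, ← map_mul,
        inv_mul_cancel₀ (Nat.cast_ne_zero.mpr hc0), map_one, one_mul]
    rwa [this] at h2
  -- key induction
  have key : ∀ j : ℕ, j ≤ n → x ^ (n - j) * y ^ (2 * j) ∈ I := by
    intro j
    induction j with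
    | zero => simpa using hn
    | succ j ih =>
      intro hj
      have hjn : j ≤ n := Nat.le_of_succ_le hj
      have h1 : x ^ (n - j) * y ^ (2 * j) ∈ I := ih hjn
      set d := n - (j + 1) with hd
      have hnj : n - j = d + 1 := by omega
      rw [hnj] at h1
      have h2 : P a (x ^ (d + 1) * y ^ (2 * j)) ∈ I := hI _ h1 a
      have h3 : P a (x ^ (d + 1) * y ^ (2 * j)) * y ∈ I := I.mul_mem_right y h2
      have h4 : ((2 * j : ℕ) : A) * (x ^ (d + 1) * y ^ (2 * j)) * P a y ∈ I := by
        exact I.mul_mem_right _ (I.mul_mem_left _ h1)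
      have h5 : ((d + 1 : ℕ) : A) * (x ^ d * y ^ (2 * (j + 1))) ∈ I := by
        have heq : ((d + 1 : ℕ) : A) * (x ^ d * y ^ (2 * (j + 1)))
            = P a (x ^ (d + 1) * y ^ (2 * j)) * y
              - ((2 * j : ℕ) : A) * (x ^ (d + 1) * y ^ (2 * j)) * P a y := by
          rw [hleib, add_mul, mul_assoc (x ^ (d+1)), hpow', hpow]
          push_cast
          ring
        rw [heq]
        exact I.sub_mem h3 h4
      exact hc (d + 1) _ (Nat.succ_ne_zero d) h5
  refine ⟨2 * n, ?_⟩
  have := key n le_rfl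
  simpa using this
end

section
/- Let A be a commutative Poisson algebra over a field of characteristic zero and I a Poisson ideal of A. Then every prime ideal of A that is minimal over I is a Poisson ideal. -/
/-- Key commutative algebra fact: if `p` is a minimal prime over `I` and `x ∈ p`,
then some multiple `s * x ^ n` with `s ∉ p` lies in `I`. -/
lemma exists_mul_pow_mem_of_mem_minimalPrimes {A : Type*} [CommRing A]
    {I p : Ideal A} (hp : p ∈ I.minimalPrimes) {x : A} (hx : x ∈ p) :
    ∃ n : ℕ, ∃ s : A, s ∉ p ∧ s * x ^ n ∈ I := by
  classical
  set T : Submonoid A :=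
    { carrier := {y | ∃ s ∉ p, ∃ n : ℕ, y = s * x ^ n}
      mul_mem' := by
        rintro y z ⟨s, hs, n, rfl⟩ ⟨t, ht, m, rfl⟩
        exact ⟨s * t, fun h => ((hp.1.1.mem_or_mem h).elim hs ht), n + m, by ring⟩
      one_mem' := ⟨1, fun h => hp.1.1.ne_top (p.eq_top_iff_one.mpr h), 0, by ring⟩ } with hT
  by_contra hcon
  push_neg at hcon
  have hdisj : Disjoint (I : Set A) (T : Set A) := by
    rw [Set.disjoint_left]
    rintro y hyI ⟨s, hs, n, rfl⟩
    exact hcon n s hs hyI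
  obtain ⟨q, hq, hIq, hqT⟩ := Ideal.exists_le_prime_disjoint I T hdisj
  have hqp : q ≤ p := by
    intro y hy
    by_contra hyp
    exact Set.disjoint_left.mp hqT hy ⟨y, hyp, 0, by ring⟩
  have hpq : p ≤ q := hp.2 ⟨hq, hIq⟩ hqp
  have hxT : x ∈ (T : Set A) :=
    ⟨1, fun h => hp.1.1.ne_top (p.eq_top_iff_one.mpr h), 1, by ring⟩
  exact Set.disjoint_left.mp hqT (hpq hx) hxT

/-- If `A` is a commutative Poisson algebra over a characteristic-zero field `k`
and `I` is a Poisson ideal of `A`, then every minimal prime over `I` is a Poisson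
ideal. -/
theorem stmt7 {k A : Type*} [Field k] [CharZero k] [CommRing A] [Algebra k A]
    (P : A → A → A)
    (hlin₁ : ∀ a : A, IsLinearMap k (P a))
    (hlin₂ : ∀ b : A, IsLinearMap k (fun a => P a b))
    (hanti : ∀ a b : A, P a b = -P b a)
    (hjac : ∀ a b c : A, P a (P b c) = P (P a b) c + P b (P a c))
    (hleib : ∀ a b c : A, P a (b * c) = P a b * c + b * P a c)
    (I : Ideal A) (hI : ∀ x ∈ I, ∀ a : A, P a x ∈ I) :
    ∀ p ∈ I.minimalPrimes, ∀ x ∈ p, ∀ a : A, P a x ∈ p := by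
  classical
  intro p hp x hx a
  -- derivative of a power
  have hpow : ∀ m : ℕ, P a (x ^ (m + 1)) = (m + 1 : ℕ) • (x ^ m * P a x) := by
    intro m
    induction m with
    | zero => simp
    | succ m ih =>
      have : x ^ (m + 2) = x * x ^ (m + 1) := by ring
      rw [this, hleib, ih]
      simp only [succ_nsmul, nsmul_eq_mul]
      ring
  have hex : ∃ n : ℕ, ∃ s : A, s ∉ p ∧ s * x ^ n ∈ I :=
    exists_mul_pow_mem_of_mem_minimalPrimes hp hx
  -- minimal such n
  let n := Nat.find hex
  obtain ⟨s, hs, hsxn⟩ : ∃ s : A, s ∉ p ∧ s * x ^ n ∈ I := Nat.find_spec hex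
  have hn0 : n ≠ 0 := by
    intro h
    apply hs
    apply hp.1.2
    simpa [h] using hsxn
  obtain ⟨m, hm⟩ : ∃ m, n = m + 1 := ⟨n - 1, (Nat.succ_pred_eq_of_pos (Nat.pos_of_ne_zero hn0)).symm⟩
  by_contra hPx
  -- differentiate s * x ^ n
  have h1 : P a (s * x ^ n) ∈ I := hI _ hsxn a
  have h2 : P a s * (x ^ n) + s * P a (x ^ n) ∈ I := by rw [← hleib]; exact h1
  have h3 : s * (P a s * x ^ n + s * P a (x ^ n)) ∈ I := I.mul_mem_left s h2
  have h4 : P a s * (s * x ^ n) ∈ I := I.mul_mem_left _ hsxn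
  have h5 : s * s * P a (x ^ n) ∈ I := by
    have : s * s * P a (x ^ n)
        = s * (P a s * x ^ n + s * P a (x ^ n)) - P a s * (s * x ^ n) := by ring
    rw [this]
    exact I.sub_mem h3 h4
  rw [hm, hpow m] at h5
  have h6 : algebraMap k A ((m + 1 : ℕ) : k) * (s * s * (x ^ m * P a x)) ∈ I := by
    have : algebraMap k A ((m + 1 : ℕ) : k) * (s * s * (x ^ m * P a x))
        = s * s * ((m + 1 : ℕ) • (x ^ m * P a x)) := by
      rw [map_natCast, nsmul_eq_mul]; ring
    rw [this]
    exact h5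
  have hne : ((m + 1 : ℕ) : k) ≠ 0 := by exact_mod_cast Nat.succ_ne_zero m
  have h7 : s * s * (x ^ m * P a x) ∈ I := by
    have h8 := I.mul_mem_left (algebraMap k A (((m + 1 : ℕ) : k)⁻¹)) h6
    rwa [← mul_assoc, ← map_mul, inv_mul_cancel₀ hne, map_one, one_mul] at h8
  -- contradiction with minimality of n
  have hssP : s * s * P a x ∉ p := fun h =>
    (hp.1.1.mem_or_mem h).elim (fun h' => (hp.1.1.mem_or_mem h').elim hs hs) hPx
  have : s * s * P a x * x ^ m ∈ I := by
    have : s * s * P a x * x ^ m = s * s * (x ^ m * P a x) := by ring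
    rw [this]; exact h7
  have hmlt : m < n := by omega
  exact Nat.find_min hex hmlt ⟨_, hssP, this⟩
end

section
/- Every nonzero Lie ideal of the positive Witt algebra W₊ contains some basis element e_n, and hence has finite codimension in W₊. In particular, W₊ is noetherian as a module over itself. -/
set_option linter.unusedSectionVars false

section aux
variable {k L : Type*} [Field k] [CharZero k] [LieRing L] [LieAlgebra k L]
  (E : Module.Basis ℕ+ k L)
  (hE : ∀ i j : ℕ+, ⁅E i, E j⁆ = (((j : ℕ) : k) - ((i : ℕ) : k)) • E (i + j))

include hE in
lemma aux_T (a i : ℕ+) :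
    ⁅E (2*a+2), ⁅E a, E i⁆⁆ - ⁅E (2*a+1), ⁅E (a+1), E i⁆⁆
      = (((a:ℕ):k) - ((i:ℕ):k)) • E (i + (3*a+2)) := by
  have h1 : (2*a+2) + (a+i) = i + (3*a+2) := by
    apply PNat.coe_injective; push_cast; ring
  have h2 : (2*a+1) + ((a+1)+i) = i + (3*a+2) := by
    apply PNat.coe_injective; push_cast; ring
  rw [hE, lie_smul, hE, hE, lie_smul, hE, smul_smul, smul_smul, h1, h2, ← sub_smul]
  congr 1
  push_cast
  ring

include hE in
lemma aux_key (𝔩 : LieIdeal k L) :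
    ∀ N : ℕ, ∀ x, x ∈ 𝔩 → x ≠ 0 → (E.repr x).support.card ≤ N → ∃ n, E n ∈ 𝔩 := by
  intro N
  induction N with
  | zero =>
    intro x hx hx0 hc
    exact absurd (Finsupp.card_support_eq_zero.mp (Nat.le_zero.mp hc))
      (by simpa using hx0)
  | succ N ih =>
    intro x hx hx0 hc
    have hcn : E.repr x ≠ 0 := by simpa using hx0
    have hs1 : (E.repr x).support.Nonempty := Finsupp.support_nonempty_iff.mpr hcn
    have hxsum : x = ∑ i ∈ (E.repr x).support, (E.repr x) i • E i := by
      conv_lhs => rw [← E.linearCombination_repr x]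
      rw [Finsupp.linearCombination_apply, Finsupp.sum]
    by_cases h1 : (E.repr x).support.card = 1
    · obtain ⟨n, hn⟩ := Finset.card_eq_one.mp h1
      set cn := (E.repr x) n with hcn'
      have hxn : x = cn • E n := by
        conv_lhs => rw [hxsum]
        rw [hn, Finset.sum_singleton]
      have hc0 : cn ≠ 0 := by
        have : n ∈ (E.repr x).support := by rw [hn]; exact Finset.mem_singleton_self n
        exact Finsupp.mem_support_iff.mp this
      refine ⟨n, ?_⟩
      have h2 := 𝔩.smul_mem cn⁻¹ hx
      rw [hxn] at h2
      rwa [smul_smul, inv_mul_cancel₀ hc0, one_smul] at h2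
    · have h2 : 1 < (E.repr x).support.card := by
        have := Finset.card_pos.mpr hs1
        omega
      obtain ⟨a, ha⟩ := hs1
      obtain ⟨b, hb, hba⟩ := Finset.exists_mem_ne h2 a
      set y := ⁅E (2*a+2), ⁅E a, x⁆⁆ - ⁅E (2*a+1), ⁅E (a+1), x⁆⁆ with hy
      have hy𝔩 : y ∈ 𝔩 := by
        apply 𝔩.sub_mem <;> exact lie_mem_right k L 𝔩 _ _ (lie_mem_right k L 𝔩 _ _ hx)
      set T : L →ₗ[k] L :=
        ((LieAlgebra.ad k L (E (2*a+2))) ∘ₗ (LieAlgebra.ad k L (E a))) -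
          ((LieAlgebra.ad k L (E (2*a+1))) ∘ₗ (LieAlgebra.ad k L (E (a+1)))) with hT
      have hTz : ∀ z : L, T z = ⁅E (2*a+2), ⁅E a, z⁆⁆ - ⁅E (2*a+1), ⁅E (a+1), z⁆⁆ := by
        intro z; simp [hT]
      have hysum : y = ∑ i ∈ (E.repr x).support,
          ((E.repr x) i * (((a:ℕ):k) - ((i:ℕ):k))) • E (i + (3*a+2)) := by
        rw [hy, ← hTz]
        conv_lhs => rw [hxsum]
        rw [map_sum]
        refine Finset.sum_congr rfl fun i _ => ?_
        rw [map_smul, hTz, aux_T E hE a i, smul_smul]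
      have hrepr : E.repr y = ∑ i ∈ (E.repr x).support,
          ((E.repr x) i * (((a:ℕ):k) - ((i:ℕ):k))) • Finsupp.single (i + (3*a+2)) (1:k) := by
        rw [hysum, map_sum]
        simp [Module.Basis.repr_self]
      have heval : ∀ j : ℕ+, (E.repr y) j
          = ∑ i ∈ (E.repr x).support,
              (if i + (3*a+2) = j then (E.repr x) i * (((a:ℕ):k) - ((i:ℕ):k)) else 0) := by
        intro j
        rw [hrepr, Finsupp.finset_sum_apply]
        refine Finset.sum_congr rfl fun i _ => ?_
        rw [Finsupp.smul_apply, Finsupp.single_apply]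
        split <;> simp
      have hyb : (E.repr y) (b + (3*a+2)) = (E.repr x) b * (((a:ℕ):k) - ((b:ℕ):k)) := by
        rw [heval]
        simp only [add_left_inj]
        rw [Finset.sum_ite_eq' (E.repr x).support b, if_pos hb]
      have hab : ((a:ℕ):k) - ((b:ℕ):k) ≠ 0 := by
        refine sub_ne_zero.mpr fun h => hba ?_
        exact (PNat.coe_injective (Nat.cast_injective h)).symm
      have hy0 : y ≠ 0 := by
        intro h0
        rw [h0] at hyb
        simp only [map_zero, Finsupp.coe_zero, Pi.zero_apply] at hyb
        exact (mul_ne_zero (Finsupp.mem_support_iff.mp hb) hab) hyb.symm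
      have hsupp : (E.repr y).support ⊆
          ((E.repr x).support.erase a).image (· + (3*a+2)) := by
        intro j hj
        by_contra hjn
        apply Finsupp.mem_support_iff.mp hj
        rw [heval]
        apply Finset.sum_eq_zero
        intro i hi
        split
        · rename_i hij
          by_cases hia : i = a
          · subst hia; simp
          · exact absurd (Finset.mem_image.mpr ⟨i, Finset.mem_erase.mpr ⟨hia, hi⟩, hij⟩) hjn
        · rfl
      have hcard : (E.repr y).support.card ≤ N := by
        have h3 := Finset.card_le_card hsupp
        have h4 := Finset.card_image_le (s := (E.repr x).support.erase a)
          (f := (· + (3*a+2)))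
        have h5 := Finset.card_erase_of_mem ha
        omega
      exact ih y hy𝔩 hy0 hcard


include hE in
lemma aux_tail (𝔩 : LieIdeal k L) (n : ℕ+) (hn : E n ∈ 𝔩) :
    ∀ m : ℕ+, 2*n+1 ≤ m → E m ∈ 𝔩 := by
  -- step: from E m with 2 ≤ m, get E (m+1)
  have step : ∀ m : ℕ+, 2 ≤ m → E m ∈ 𝔩 → E (m+1) ∈ 𝔩 := by
    intro m hm hmem
    have hb := hE 1 m
    have hco : ((m:ℕ):k) - ((1:ℕ+):ℕ) ≠ 0 := by
      rw [PNat.one_coe, Nat.cast_one]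
      refine sub_ne_zero.mpr fun h => ?_
      have : (m:ℕ) = 1 := by exact_mod_cast h
      have h2 : (2:ℕ) ≤ (m:ℕ) := hm
      omega
    have h3 : ⁅E 1, E m⁆ ∈ 𝔩 := lie_mem_right k L 𝔩 _ _ hmem
    rw [hb] at h3
    have h4 := 𝔩.smul_mem (((m:ℕ):k) - ((1:ℕ+):ℕ))⁻¹ h3
    rw [smul_smul, inv_mul_cancel₀ hco, one_smul, add_comm] at h4
    exact h4
  -- base : E (2*n+1) ∈ 𝔩
  have base : E (2*n+1) ∈ 𝔩 := by
    have hb := hE (n+1) n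
    have hidx : (n+1) + n = 2*n+1 := by
      apply PNat.coe_injective; push_cast; ring
    have hco : ((n:ℕ):k) - (((n+1:ℕ+)):ℕ) ≠ 0 := by
      push_cast
      intro h
      exact zero_ne_one (by linear_combination h : (0:k) = 1)
    have h3 : ⁅E (n+1), E n⁆ ∈ 𝔩 := lie_mem_right k L 𝔩 _ _ hn
    rw [hb, hidx] at h3
    have h4 := 𝔩.smul_mem (((n:ℕ):k) - (((n+1:ℕ+)):ℕ))⁻¹ h3
    rwa [smul_smul, inv_mul_cancel₀ hco, one_smul] at h4
  -- climb
  have climb : ∀ j : ℕ, ∀ m : ℕ+, (m:ℕ) = ((2*n+1 : ℕ+):ℕ) + j → E m ∈ 𝔩 := by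
    intro j
    induction j with
    | zero =>
      intro m hm
      have : m = 2*n+1 := PNat.coe_injective (by omega)
      rwa [this]
    | succ j ih =>
      intro m hm
      have hpos : 0 < 2*(n:ℕ)+1+j := by positivity
      set m' : ℕ+ := ⟨2*(n:ℕ)+1+j, hpos⟩ with hm'
      have hm'co : (m':ℕ) = ((2*n+1 : ℕ+):ℕ) + j := by
        show 2*(n:ℕ)+1+j = _
        push_cast; ring
      have h1 : E m' ∈ 𝔩 := ih m' hm'co
      have h2 : (2:ℕ) ≤ (m':ℕ) := by
        have := n.pos
        rw [hm'co]; push_cast; omega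
      have h2' : (2:ℕ+) ≤ m' := by
        rw [← PNat.coe_le_coe]; exact_mod_cast h2
      have h3 : m = m' + 1 := by
        apply PNat.coe_injective
        rw [hm]
        push_cast [hm'co]
        ring
      rw [h3]
      exact step m' h2' h1
  intro m hm
  have hm' : ((2*n+1:ℕ+):ℕ) ≤ (m:ℕ) := hm
  exact climb ((m:ℕ) - ((2*n+1:ℕ+):ℕ)) m (by omega)

lemma aux_codim (𝔩 : LieIdeal k L) (N : ℕ+) (h : ∀ m : ℕ+, N ≤ m → E m ∈ 𝔩) :
    FiniteDimensional k (L ⧸ 𝔩.toSubmodule) := by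
  suffices h' : (⊤ : Submodule k (L ⧸ 𝔩.toSubmodule)).FG by exact ⟨h'⟩
  rw [Submodule.fg_def]
  refine ⟨(𝔩.toSubmodule.mkQ ∘ E) '' {m : ℕ+ | m < N}, ?_, ?_⟩
  · apply Set.Finite.image
    have : Set.MapsTo (↑· : ℕ+ → ℕ) {m : ℕ+ | m < N} (Set.Iio (N:ℕ)) := by
      intro m hm; exact_mod_cast hm
    exact Set.Finite.of_finite_image
      ((Set.finite_Iio (N:ℕ)).subset (Set.mapsTo_iff_image_subset.mp this))
      (PNat.coe_injective.injOn)
  · have htop : Submodule.span k (Set.range (𝔩.toSubmodule.mkQ ∘ E)) = ⊤ := by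
      rw [Set.range_comp, ← Submodule.map_span, E.span_eq, Submodule.map_top,
        LinearMap.range_eq_top.mpr 𝔩.toSubmodule.mkQ_surjective]
    rw [← top_le_iff, ← htop]
    rw [Submodule.span_le]
    rintro z ⟨m, rfl⟩
    by_cases hm : m < N
    · exact Submodule.subset_span ⟨m, hm, rfl⟩
    · have : E m ∈ 𝔩 := h m (le_of_not_gt hm)
      have : (𝔩.toSubmodule.mkQ ∘ E) m = 0 := by
        simp only [Function.comp_apply, Submodule.mkQ_apply,
          Submodule.Quotient.mk_eq_zero]
        exact this
      rw [this]
      exact Submodule.zero_mem _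


end aux

/-- Every nonzero Lie ideal of the positive Witt algebra (a Lie algebra over a
characteristic-zero field with basis `e_n`, `n ≥ 1`, and `[e_i, e_j] = (j-i)e_{i+j}`)
contains some basis element `e_n`, and hence has finite codimension.  In particular
the lattice of Lie ideals satisfies the ascending chain condition. -/
theorem stmt8 {k L : Type*} [Field k] [CharZero k] [LieRing L] [LieAlgebra k L]
    (E : Module.Basis ℕ+ k L)
    (hE : ∀ i j : ℕ+, ⁅E i, E j⁆ = (((j : ℕ) : k) - ((i : ℕ) : k)) • E (i + j)) :
    (∀ 𝔩 : LieIdeal k L, 𝔩 ≠ ⊥ →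
      (∃ n : ℕ+, E n ∈ 𝔩) ∧ FiniteDimensional k (L ⧸ 𝔩.toSubmodule)) ∧
    WellFoundedGT (LieIdeal k L) := by
  have part1 : ∀ 𝔩 : LieIdeal k L, 𝔩 ≠ ⊥ →
      (∃ n : ℕ+, E n ∈ 𝔩) ∧ FiniteDimensional k (L ⧸ 𝔩.toSubmodule) := by
    intro 𝔩 h
    rw [Ne, LieSubmodule.eq_bot_iff] at h
    push_neg at h
    obtain ⟨x, hx, hx0⟩ := h
    obtain ⟨n, hn⟩ := aux_key E hE 𝔩 (E.repr x).support.card x hx hx0 le_rfl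
    refine ⟨⟨n, hn⟩, ?_⟩
    exact aux_codim E 𝔩 (2*n+1) (aux_tail E hE 𝔩 n hn)
  refine ⟨part1, ?_⟩
  refine ⟨?_⟩
  refine (wellFoundedGT_iff_monotone_chain_condition (α := LieIdeal k L)).mpr ?_ |>.wf
  intro f
  by_cases hbot : ∀ m, f m = ⊥
  · exact ⟨0, fun m _ => by rw [hbot, hbot]⟩
  · push_neg at hbot
    obtain ⟨n₀, hn₀⟩ := hbot
    have hfd : FiniteDimensional k (L ⧸ (f n₀).toSubmodule) := (part1 (f n₀) hn₀).2
    have hnoeth : IsNoetherian k (L ⧸ (f n₀).toSubmodule) := IsNoetherian.iff_fg.mpr hfd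
    set p : Submodule k L := (f n₀).toSubmodule with hp
    set g : ℕ →o Submodule k (L ⧸ p) :=
      ⟨fun m => ((f (n₀ + m)).toSubmodule).map p.mkQ,
        fun i j hij => Submodule.map_mono (f.monotone (by omega))⟩ with hg
    obtain ⟨n, hstab⟩ := monotone_stabilizes_iff_noetherian.mpr hnoeth g
    have hcomap : ∀ t, n₀ ≤ t →
        (f t).toSubmodule = Submodule.comap p.mkQ (((f t).toSubmodule).map p.mkQ) := by
      intro t ht
      rw [Submodule.comap_map_mkQ, sup_eq_right.mpr]
      exact f.monotone ht
    refine ⟨n₀ + n, fun m hm => ?_⟩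
    apply LieSubmodule.toSubmodule_injective
    have h1 : (f (n₀ + n)).toSubmodule = Submodule.comap p.mkQ (g n) :=
      hcomap (n₀ + n) (by omega)
    have h2 : g n = g (m - n₀) := hstab (m - n₀) (by omega)
    have h3 : n₀ + (m - n₀) = m := by omega
    rw [h1, h2, hg]
    show Submodule.comap p.mkQ (((f (n₀ + (m - n₀))).toSubmodule).map p.mkQ) = _
    rw [h3]
    exact (hcomap m (by omega)).symm
end

section
/- Let A be a commutative algebra and (0) ⊆ I₁ ⊆ I₂ ⊆ ... a chain of radical ideals of A such that (a) the Krull dimension of A/I₁ is finite, and (b) for each j, the ideal I_j has only finitely many minimal primes in A. Then the chain stabilises: I_{j+1} = I_j for all sufficiently large j. -/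
open Order

/-- A decreasing sequence of finite sets stabilises. -/
private lemma finite_antitone_stabilizes {α : Type*} (T : ℕ → Set α)
    (hfin : (T 0).Finite) (hdec : ∀ j, T (j + 1) ⊆ T j) :
    ∃ N, ∀ j ≥ N, T j = T N := by
  have hsub : ∀ j k, j ≤ k → T k ⊆ T j := by
    intro j k h
    induction k, h using Nat.le_induction with
    | base => exact subset_rfl
    | succ k hk ih => exact (hdec k).trans ih
  have hfin' : ∀ j, (T j).Finite := fun j => hfin.subset (hsub 0 j (Nat.zero_le j))
  obtain ⟨N, hN⟩ : ∃ N, (T N).ncard = sInf (Set.range fun j => (T j).ncard) := by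
    have : sInf (Set.range fun j => (T j).ncard) ∈ Set.range fun j => (T j).ncard :=
      Nat.sInf_mem ⟨(T 0).ncard, ⟨0, rfl⟩⟩
    obtain ⟨N, hN⟩ := this
    exact ⟨N, hN⟩
  refine ⟨N, fun j hj => ?_⟩
  exact Set.eq_of_subset_of_ncard_le (hsub N j hj)
    (by rw [hN]; exact Nat.sInf_le ⟨j, rfl⟩) (hfin' N)

/-- The abstract combinatorial core: a sequence of finite antichains in a poset, each element
of the next set lying above some element of the previous one, with a strictly decreasing
bounded measure, is eventually constant. -/
private lemma chain_stabilizes {α : Type*} [PartialOrder α] (μ : α → ℕ∞)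
    (hμ : ∀ p q : α, p < q → μ q < ⊤ → μ q < μ p) :
    ∀ (d : ℕ) (M : ℕ → Set α), (∀ j, (M j).Finite) →
      (∀ j, ∀ p ∈ M j, ∀ q ∈ M j, p ≤ q → p = q) →
      (∀ j, ∀ q ∈ M (j + 1), ∃ p ∈ M j, p ≤ q) →
      (∀ j, ∀ p ∈ M j, μ p ≤ (d : ℕ∞)) →
      ∃ N, ∀ j ≥ N, M j = M N := by
  intro d
  induction d with
  | zero =>
    intro M hfin hanti hstep hbound
    apply finite_antitone_stabilizes M (hfin 0)
    intro j q hq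
    obtain ⟨p, hp, hpq⟩ := hstep j q hq
    rcases eq_or_lt_of_le hpq with rfl | hlt
    · exact hp
    · exfalso
      have h1 := hμ p q hlt (lt_of_le_of_lt (hbound _ q hq) (by simp))
      have h2 := (h1.trans_le (hbound j p hp))
      simp at h2
  | succ d ih =>
    intro M hfin hanti hstep hbound
    set T : ℕ → Set α := fun j => {p ∈ M j | μ p = ((d + 1 : ℕ) : ℕ∞)} with hT
    have hTdec : ∀ j, T (j + 1) ⊆ T j := by
      rintro j q ⟨hq, hμq⟩
      obtain ⟨p, hp, hpq⟩ := hstep j q hq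
      rcases eq_or_lt_of_le hpq with rfl | hlt
      · exact ⟨hp, hμq⟩
      · exfalso
        have h1 := hμ p q hlt (by rw [hμq]; exact (WithTop.coe_lt_top (d+1)))
        rw [hμq] at h1
        exact absurd (h1.trans_le (hbound j p hp)) (lt_irrefl _)
    obtain ⟨N₁, hN₁⟩ := finite_antitone_stabilizes T ((hfin 0).subset fun x hx => hx.1) hTdec
    set T' := T N₁ with hT'
    set M' : ℕ → Set α := fun j => M (N₁ + j) \ T' with hM'
    have hTsub : ∀ k, T' ⊆ M (N₁ + k) := by
      intro k x hx
      have h : T (N₁ + k) = T N₁ := hN₁ _ (Nat.le_add_right _ _)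
      rw [hT'] at hx
      rw [← h] at hx
      exact hx.1
    have hM'fin : ∀ j, (M' j).Finite := fun j => (hfin (N₁ + j)).diff
    have hM'anti : ∀ j, ∀ p ∈ M' j, ∀ q ∈ M' j, p ≤ q → p = q :=
      fun j p hp q hq => hanti _ p hp.1 q hq.1
    have hM'step : ∀ j, ∀ q ∈ M' (j + 1), ∃ p ∈ M' j, p ≤ q := by
      rintro j q ⟨hq, hqT⟩
      obtain ⟨p, hp, hpq⟩ := hstep (N₁ + j) q (by rwa [show N₁ + j + 1 = N₁ + (j + 1) by omega])
      refine ⟨p, ⟨hp, ?_⟩, hpq⟩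
      intro hpT'
      have hpM : p ∈ M (N₁ + (j + 1)) := hTsub (j + 1) hpT'
      have heq := hanti _ p hpM q hq hpq
      exact hqT (heq ▸ hpT')
    have hM'bound : ∀ j, ∀ p ∈ M' j, μ p ≤ (d : ℕ∞) := by
      rintro j p ⟨hp, hpT⟩
      have h1 : μ p ≤ ((d + 1 : ℕ) : ℕ∞) := hbound _ p hp
      have h2 : μ p ≠ ((d + 1 : ℕ) : ℕ∞) := by
        intro h
        apply hpT
        have hmem : p ∈ T (N₁ + j) := ⟨hp, h⟩
        rwa [hN₁ _ (Nat.le_add_right _ _)] at hmem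
      have h3 : μ p < ((d : ℕ) : ℕ∞) + 1 := by
        refine lt_of_le_of_ne ?_ (by push_cast at h2 ⊢; exact h2)
        push_cast at h1 ⊢; exact h1
      exact (ENat.lt_add_one_iff (by simp)).mp h3
    obtain ⟨N₂, hN₂⟩ := ih M' hM'fin hM'anti hM'step hM'bound
    refine ⟨N₁ + N₂, fun j hj => ?_⟩
    have hdecomp : ∀ k, M (N₁ + k) = T' ∪ M' k := fun k =>
      (Set.union_diff_cancel (hTsub k)).symm
    obtain ⟨k, hk, rfl⟩ : ∃ k, N₂ ≤ k ∧ j = N₁ + k := ⟨j - N₁, by omega, by omega⟩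
    rw [hdecomp k, hdecomp N₂, hN₂ k hk]

/-- Let `A` be a commutative ring and `I₁ ⊆ I₂ ⊆ ⋯` an ascending chain of radical
ideals such that `A/I₁` has finite Krull dimension and each `I_j` has only finitely
many minimal primes.  Then the chain stabilises. -/
theorem stmt14 {A : Type*} [CommRing A] (I : ℕ → Ideal A) (hmono : Monotone I)
    (hrad : ∀ j, (I j).radical = I j)
    (hdim : ∃ d : ℕ, ringKrullDim (A ⧸ I 0) ≤ (d : ℕ))
    (hmin : ∀ j, (I j).minimalPrimes.Finite) :
    ∃ N : ℕ, ∀ j ≥ N, I j = I N := by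
  classical
  obtain ⟨d, hd⟩ := hdim
  -- The poset of primes containing `I 0`.
  set S := {q : PrimeSpectrum A // I 0 ≤ q.asIdeal} with hS
  -- The coheight of any such prime is at most `d`.
  have hub : ∀ p : S, Order.coheight p ≤ (d : ℕ∞) := by
    have hprime : ∀ q : S, (Ideal.map (Ideal.Quotient.mk (I 0)) q.1.asIdeal).IsPrime := by
      intro q
      haveI := q.1.2
      exact Ideal.map_isPrime_of_surjective Ideal.Quotient.mk_surjective
        (by rw [Ideal.mk_ker]; exact q.2)
    set f : S → PrimeSpectrum (A ⧸ I 0) := fun q =>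
      ⟨Ideal.map (Ideal.Quotient.mk (I 0)) q.1.asIdeal, hprime q⟩ with hf
    have hcomap : ∀ q : S, Ideal.comap (Ideal.Quotient.mk (I 0)) (f q).asIdeal = q.1.asIdeal := by
      intro q
      rw [hf]
      rw [Ideal.comap_map_of_surjective _ Ideal.Quotient.mk_surjective,
        ← RingHom.ker_eq_comap_bot, Ideal.mk_ker, sup_eq_left.mpr q.2]
    have hfmono : StrictMono f := by
      intro a b hab
      have hle : (f a).asIdeal ≤ (f b).asIdeal :=
        Ideal.map_mono ((PrimeSpectrum.asIdeal_le_asIdeal _ _).mpr hab.le)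
      have hne : (f a).asIdeal ≠ (f b).asIdeal := by
        intro h
        have := congrArg (Ideal.comap (Ideal.Quotient.mk (I 0))) h
        rw [hcomap a, hcomap b] at this
        exact absurd (Subtype.ext (PrimeSpectrum.ext this)) hab.ne
      exact (PrimeSpectrum.asIdeal_lt_asIdeal _ _).mp (lt_of_le_of_ne hle hne)
    intro p
    have h1 : Order.coheight p ≤ Order.coheight (f p) :=
      Order.coheight_le_coheight_apply_of_strictMono f hfmono p
    have h2 : (Order.coheight (f p) : WithBot ℕ∞) ≤ ((d : ℕ∞) : WithBot ℕ∞) := by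
      refine (Order.coheight_le_krullDim (f p)).trans (le_trans (le_of_eq rfl) ?_)
      exact hd.trans_eq (by norm_cast)
    exact h1.trans (WithBot.coe_le_coe.mp h2)
  -- The sets of minimal primes, viewed inside `S`.
  set M : ℕ → Set S := fun j => {p : S | p.1.asIdeal ∈ (I j).minimalPrimes} with hM
  have hinj : Function.Injective (fun p : S => p.1.asIdeal) := by
    intro a b h
    exact Subtype.ext (PrimeSpectrum.ext h)
  have hfin : ∀ j, (M j).Finite := by
    intro j
    exact (hmin j).preimage hinj.injOn
  have hanti : ∀ j, ∀ p ∈ M j, ∀ q ∈ M j, p ≤ q → p = q := by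
    intro j p hp q hq hpq
    have := hq.2 ⟨hp.1.1, hp.1.2⟩ ((PrimeSpectrum.asIdeal_le_asIdeal _ _).mpr hpq)
    exact hinj (le_antisymm ((PrimeSpectrum.asIdeal_le_asIdeal _ _).mpr hpq) this)
  have hstep : ∀ j, ∀ q ∈ M (j + 1), ∃ p ∈ M j, p ≤ q := by
    intro j q hq
    haveI := q.1.2
    have hle : I j ≤ q.1.asIdeal := le_trans (hmono (Nat.le_succ j)) hq.1.2
    obtain ⟨p, hp, hpq⟩ := Ideal.exists_minimalPrimes_le hle
    haveI := hp.1.1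
    refine ⟨⟨⟨p, hp.1.1⟩, le_trans (hmono (Nat.zero_le j)) hp.1.2⟩, hp, ?_⟩
    exact (PrimeSpectrum.asIdeal_le_asIdeal _ _).mp hpq
  have hbound : ∀ j, ∀ p ∈ M j, Order.coheight p ≤ (d : ℕ∞) := fun j p _ => hub p
  have hμ : ∀ p q : S, p < q → Order.coheight q < ⊤ → Order.coheight q < Order.coheight p :=
    fun p q h hfin => Order.coheight_strictAnti h hfin
  obtain ⟨N, hN⟩ := chain_stabilizes (Order.coheight) hμ d M hfin hanti hstep hbound
  refine ⟨N, fun j hj => ?_⟩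
  have hMP : (I j).minimalPrimes = (I N).minimalPrimes := by
    ext x
    constructor
    · intro hx
      haveI := hx.1.1
      have hx0 : I 0 ≤ x := le_trans (hmono (Nat.zero_le _)) hx.1.2
      have hmem : (⟨⟨x, hx.1.1⟩, hx0⟩ : S) ∈ M j := hx
      rw [hN j hj] at hmem
      exact hmem
    · intro hx
      haveI := hx.1.1
      have hx0 : I 0 ≤ x := le_trans (hmono (Nat.zero_le _)) hx.1.2
      have hmem : (⟨⟨x, hx.1.1⟩, hx0⟩ : S) ∈ M N := hx
      rw [← hN j hj] at hmem
      exact hmem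
  rw [← hrad j, ← hrad N, ← Ideal.sInf_minimalPrimes, ← Ideal.sInf_minimalPrimes, hMP]
end

section
/- Let k ≤ ℓ be positive integers, and let J(k, ℓ) be the ideal of the polynomial ring k[x₁, x₂, ...] generated by all monomials x_i x_j with i ≥ k and j − i ≥ ℓ − k, where the grading gives x_i degree i. Then the dimension of the degree-n graded component of k[x₁, x₂, ...]/J(k, ℓ) is O(n^{ℓ−1}). -/
open MvPolynomial



private def st17D (d : ℕ+ →₀ ℕ) (j : ℕ) : ℕ := if h : 0 < j then d ⟨j, h⟩ else 0

private lemma st17D_apply (d : ℕ+ →₀ ℕ) (j : ℕ+) : st17D d (j : ℕ) = d j := by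
  simp only [st17D]
  split
  · rfl
  · exact absurd j.2 ‹_›

private lemma st17D_le {d : ℕ+ →₀ ℕ} {n : ℕ}
    (hd : Finsupp.weight (fun i : ℕ+ => (i : ℕ)) d = n) (j : ℕ) : st17D d j ≤ n := by
  rw [st17D]
  split
  · rename_i h
    have h2 := Finsupp.le_weight (fun i : ℕ+ => (i : ℕ)) (s := ⟨j, h⟩) (by simp; omega) d
    rw [hd] at h2
    exact h2
  · omega

private lemma st17D_eq_zero {d : ℕ+ →₀ ℕ} {n : ℕ}
    (hd : Finsupp.weight (fun i : ℕ+ => (i : ℕ)) d = n) {j : ℕ} (hj : n < j) :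
    st17D d j = 0 := by
  rw [st17D]
  split
  · rename_i h
    by_contra hne
    have h2 := Finsupp.le_weight_of_ne_zero' (w := fun i : ℕ+ => (i : ℕ)) (s := ⟨j, h⟩) hne
    rw [hd] at h2
    simp at h2
    omega
  · rfl

private lemma st17_sum_eq {d : ℕ+ →₀ ℕ} {n : ℕ}
    (hd : Finsupp.weight (fun i : ℕ+ => (i : ℕ)) d = n) :
    ∑ j ∈ Finset.range (n + 1), j * st17D d j = n := by
  classical
  have hw : n = ∑ x ∈ d.support, (x : ℕ) * d x := by
    rw [← hd, Finsupp.weight_apply, Finsupp.sum]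
    exact Finset.sum_congr rfl fun x _ => by rw [smul_eq_mul, mul_comm]
  have hsub : d.support.map ⟨fun x : ℕ+ => (x : ℕ), fun a b h => by exact PNat.coe_injective h⟩
      ⊆ Finset.range (n + 1) := by
    intro j hj
    simp only [Finset.mem_map, Function.Embedding.coeFn_mk] at hj
    obtain ⟨x, hx, rfl⟩ := hj
    have hne : d x ≠ 0 := Finsupp.mem_support_iff.mp hx
    have h2 := Finsupp.le_weight_of_ne_zero' (w := fun i : ℕ+ => (i : ℕ)) hne
    rw [hd] at h2
    have h3 : (x : ℕ) ≤ n := by simpa using h2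
    simp only [Finset.mem_range]
    show (x : ℕ) < n + 1
    omega
  rw [← Finset.sum_subset hsub]
  · rw [Finset.sum_map]
    change ∑ x ∈ d.support, (x : ℕ) * st17D d x = n
    simp only [Function.Embedding.coeFn_mk, st17D_apply]
    exact hw.symm
  · intro j hj hnot
    rcases Nat.eq_zero_or_pos j with h0 | h0
    · simp [h0]
    · rw [st17D, dif_pos h0]
      by_contra hne
      apply hnot
      simp only [Finset.mem_map, Function.Embedding.coeFn_mk]
      exact ⟨⟨j, h0⟩, Finsupp.mem_support_iff.mpr (Nat.mul_ne_zero_iff.mp hne).2, rfl⟩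


private def st17Good (k ℓ : ℕ) (d : ℕ+ →₀ ℕ) : Prop :=
  ∀ i j : ℕ+, k ≤ (i : ℕ) → i ≤ j → ℓ - k ≤ (j : ℕ) - (i : ℕ) →
    ¬(Finsupp.single i 1 + Finsupp.single j 1 ≤ d)

private lemma st17_good_pair {k ℓ : ℕ} (hk : 1 ≤ k) {d : ℕ+ →₀ ℕ} (hG : st17Good k ℓ d)
    {i j : ℕ} (hki : k ≤ i) (hij : i < j) (hlj : i + ℓ ≤ j + k) :
    st17D d i = 0 ∨ st17D d j = 0 := by
  by_contra hc
  push_neg at hc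
  obtain ⟨h1, h2⟩ := hc
  have hi : 0 < i := by omega
  have hj : 0 < j := by omega
  rw [st17D, dif_pos hi] at h1
  rw [st17D, dif_pos hj] at h2
  refine hG ((⟨i, hi⟩ : ℕ+)) ((⟨j, hj⟩ : ℕ+)) hki ?_ ?_ ?_
  · exact_mod_cast Nat.le_of_lt hij
  · simp only [PNat.mk_coe]; omega
  · intro s
    simp only [Finsupp.coe_add, Pi.add_apply]
    rcases eq_or_ne s ((⟨i, hi⟩ : ℕ+)) with rfl | hsi
    · erw [Finsupp.single_eq_same, Finsupp.single_eq_of_ne' (fun hc => by erw [Subtype.mk.injEq] at hc; omega)]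
      omega
    · erw [Finsupp.single_eq_of_ne' (Ne.symm hsi)]
      rcases eq_or_ne s ((⟨j, hj⟩ : ℕ+)) with rfl | hsj
      · erw [Finsupp.single_eq_same]; omega
      · erw [Finsupp.single_eq_of_ne' (Ne.symm hsj)]; simp

private lemma st17_good_diag {k ℓ : ℕ} (hk : 1 ≤ k) (hlk : ℓ ≤ k) {d : ℕ+ →₀ ℕ}
    (hG : st17Good k ℓ d) {i : ℕ} (hki : k ≤ i) : st17D d i ≤ 1 := by
  by_contra hc
  push_neg at hc
  have hi : 0 < i := by omega
  rw [st17D, dif_pos hi] at hc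
  refine hG ((⟨i, hi⟩ : ℕ+)) ((⟨i, hi⟩ : ℕ+)) hki le_rfl (by omega) ?_
  intro s
  simp only [Finsupp.coe_add, Pi.add_apply]
  rcases eq_or_ne s ((⟨i, hi⟩ : ℕ+)) with rfl | hsi
  · erw [Finsupp.single_eq_same]; omega
  · erw [Finsupp.single_eq_of_ne' (Ne.symm hsi)]; simp
private noncomputable def st17m (k : ℕ) (d : ℕ+ →₀ ℕ) : ℕ := sInf {j | k ≤ j ∧ st17D d j ≠ 0}






private lemma st17_bigsum {k ℓ n : ℕ} (hk : 1 ≤ k) (hkl : k < ℓ) {f : ℕ+ →₀ ℕ}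
    (hfw : Finsupp.weight (fun i : ℕ+ => (i : ℕ)) f = n) (hfG : st17Good k ℓ f)
    (hex : ∃ j, k ≤ j ∧ st17D f j ≠ 0) :
    (∑ j ∈ Finset.range (n + 1), if j < k then 0 else j * st17D f j)
      = st17m k f * (∑ o ∈ Finset.range (ℓ - k), st17D f (st17m k f + o))
        + ∑ o ∈ Finset.range (ℓ - k), o * st17D f (st17m k f + o) := by
  classical
  unfold st17m
  set mm := sInf {j | k ≤ j ∧ st17D f j ≠ 0} with hmm
  have hm : k ≤ mm ∧ st17D f mm ≠ 0 := Nat.sInf_mem hex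
  have hmin : ∀ j, k ≤ j → st17D f j ≠ 0 → mm ≤ j := fun j h1 h2 => Nat.sInf_le ⟨h1, h2⟩
  have hmn : mm ≤ n := by
    by_contra hc
    exact hm.2 (st17D_eq_zero hfw (by omega))
  have hwin : ∀ j, k ≤ j → st17D f j ≠ 0 → mm ≤ j ∧ j < mm + (ℓ - k) := by
    intro j h1 h2
    refine ⟨hmin j h1 h2, ?_⟩
    by_contra hc
    have h3 : mm < j := by omega
    have h4 : mm + ℓ ≤ j + k := by omega
    rcases st17_good_pair hk hfG hm.1 h3 h4 with h | h
    · exact hm.2 h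
    · exact h2 h
  set N := n + 1 + mm + (ℓ - k) with hN
  have hA : (∑ j ∈ Finset.range (n + 1), if j < k then 0 else j * st17D f j)
      = ∑ j ∈ Finset.range N, if j < k then 0 else j * st17D f j := by
    refine Finset.sum_subset (Finset.range_subset_range.mpr (by omega)) ?_
    intro j hj hnot
    have hjn : n < j := by
      simp only [Finset.mem_range] at hj hnot
      omega
    rw [st17D_eq_zero hfw hjn, mul_zero, ite_self]
  have hB : (∑ j ∈ Finset.Ico mm (mm + (ℓ - k)), if j < k then 0 else j * st17D f j)
      = ∑ j ∈ Finset.range N, if j < k then 0 else j * st17D f j := by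
    refine Finset.sum_subset ?_ ?_
    · intro j hj
      simp only [Finset.mem_Ico] at hj
      simp only [Finset.mem_range]
      omega
    · intro j hj hnot
      simp only [Finset.mem_Ico] at hnot
      by_cases hjk : j < k
      · rw [if_pos hjk]
      · rw [if_neg hjk]
        by_cases hz : st17D f j = 0
        · rw [hz, mul_zero]
        · have := hwin j (by omega) hz
          omega
  rw [hA, ← hB]
  have hC : (∑ j ∈ Finset.Ico mm (mm + (ℓ - k)), if j < k then 0 else j * st17D f j)
      = ∑ j ∈ Finset.Ico mm (mm + (ℓ - k)), j * st17D f j := by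
    refine Finset.sum_congr rfl fun j hj => ?_
    simp only [Finset.mem_Ico] at hj
    rw [if_neg (by omega)]
  rw [hC, Finset.sum_Ico_eq_sum_range]
  have hD : mm + (ℓ - k) - mm = ℓ - k := by omega
  rw [hD, Finset.mul_sum, ← Finset.sum_add_distrib]
  refine Finset.sum_congr rfl fun o _ => ?_
  ring
private lemma st17_count {k ℓ : ℕ} (hk : 1 ≤ k) (hkl : k ≤ ℓ) (n : ℕ) :
    ∃ hfin : {d : ℕ+ →₀ ℕ |
        Finsupp.weight (fun i : ℕ+ => (i : ℕ)) d = n ∧ st17Good k ℓ d}.Finite,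
      hfin.toFinset.card ≤ (n + 1) ^ (ℓ - 1) := by
  classical
  set G := {d : ℕ+ →₀ ℕ |
      Finsupp.weight (fun i : ℕ+ => (i : ℕ)) d = n ∧ st17Good k ℓ d} with hGdef
  set Enc : (ℕ+ →₀ ℕ) → (Fin (k - 1) → Fin (n + 1)) × (Fin (ℓ - k) → Fin (n + 1)) :=
    fun d => (fun i => ⟨min (st17D d ((i : ℕ) + 1)) n, by omega⟩,
              fun o => ⟨min (st17D d (st17m k d + (o : ℕ))) n, by omega⟩) with hEncDef
  have hinj : Set.InjOn Enc G := by
    intro d hd e he hEnc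
    obtain ⟨hdw, hdG⟩ := hd
    obtain ⟨hew, heG⟩ := he
    have hdle := fun j => st17D_le hdw j
    have hele := fun j => st17D_le hew j
    -- small indices agree
    have hsm : ∀ i : ℕ, 1 ≤ i → i < k → st17D d i = st17D e i := by
      intro i h1 h2
      have h3 := congrFun (congrArg Prod.fst hEnc) ⟨i - 1, by omega⟩
      simp only [hEncDef, Fin.mk.injEq] at h3
      have e1 : i - 1 + 1 = i := by omega
      rw [e1] at h3
      have := hdle i
      have := hele i
      omega
    have hbig : ∀ o : ℕ, o < ℓ - k → st17D d (st17m k d + o) = st17D e (st17m k e + o) := by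
      intro o ho
      have h3 := congrFun (congrArg Prod.snd hEnc) ⟨o, ho⟩
      simp only [hEncDef, Fin.mk.injEq] at h3
      have := hdle (st17m k d + o)
      have := hele (st17m k e + o)
      omega
    -- the two "big" sums agree
    have hsplit : ∀ f : ℕ+ →₀ ℕ, (∑ j ∈ Finset.range (n + 1), j * st17D f j)
        = (∑ j ∈ Finset.range (n + 1), if j < k then j * st17D f j else 0)
          + ∑ j ∈ Finset.range (n + 1), if j < k then 0 else j * st17D f j := by
      intro f
      rw [← Finset.sum_add_distrib]
      refine Finset.sum_congr rfl fun j _ => ?_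
      by_cases h : j < k <;> simp [h]
    have hsmall : (∑ j ∈ Finset.range (n + 1), if j < k then j * st17D d j else 0)
        = ∑ j ∈ Finset.range (n + 1), if j < k then j * st17D e j else 0 := by
      refine Finset.sum_congr rfl fun j _ => ?_
      by_cases h : j < k
      · rcases Nat.eq_zero_or_pos j with rfl | hj
        · simp
        · rw [if_pos h, if_pos h, hsm j hj h]
      · rw [if_neg h, if_neg h]
    have hBeq : (∑ j ∈ Finset.range (n + 1), if j < k then 0 else j * st17D d j)
        = ∑ j ∈ Finset.range (n + 1), if j < k then 0 else j * st17D e j := by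
      have h1 := hsplit d
      have h2 := hsplit e
      rw [st17_sum_eq hdw] at h1
      rw [st17_sum_eq hew] at h2
      omega
    -- main case analysis
    have key : ∀ j : ℕ, st17D d j = st17D e j := by
      rcases Nat.eq_zero_or_pos (∑ j ∈ Finset.range (n + 1),
          if j < k then 0 else j * st17D d j) with hB0 | hBpos
      · -- no big parts at all
        have hzd : ∀ j, k ≤ j → st17D d j = 0 := by
          intro j hj
          rcases le_or_gt j n with hjn | hjn
          · have h0 := (Finset.sum_eq_zero_iff.mp hB0) j (Finset.mem_range.mpr (by omega))
            rw [if_neg (by omega)] at h0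
            rcases Nat.mul_eq_zero.mp h0 with h | h
            · omega
            · exact h
          · exact st17D_eq_zero hdw hjn
        have hze : ∀ j, k ≤ j → st17D e j = 0 := by
          intro j hj
          rcases le_or_gt j n with hjn | hjn
          · have h0 := (Finset.sum_eq_zero_iff.mp (hBeq ▸ hB0)) j (Finset.mem_range.mpr (by omega))
            rw [if_neg (by omega)] at h0
            rcases Nat.mul_eq_zero.mp h0 with h | h
            · omega
            · exact h
          · exact st17D_eq_zero hew hjn
        intro j
        rcases Nat.eq_zero_or_pos j with rfl | hj0
        · simp [st17D]
        rcases lt_or_ge j k with hjk | hjk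
        · exact hsm j hj0 hjk
        · rw [hzd j hjk, hze j hjk]
      · -- there are big parts
        have hexd : ∃ j, k ≤ j ∧ st17D d j ≠ 0 := by
          have hne : (∑ j ∈ Finset.range (n + 1), if j < k then 0 else j * st17D d j) ≠ 0 :=
            Nat.pos_iff_ne_zero.mp hBpos
          obtain ⟨j, hjm, hjne⟩ := Finset.exists_ne_zero_of_sum_ne_zero hne
          by_cases hjk : j < k
          · rw [if_pos hjk] at hjne; omega
          · rw [if_neg hjk] at hjne
            exact ⟨j, by omega, (Nat.mul_ne_zero_iff.mp hjne).2⟩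
        have hexe : ∃ j, k ≤ j ∧ st17D e j ≠ 0 := by
          have hne : (∑ j ∈ Finset.range (n + 1), if j < k then 0 else j * st17D e j) ≠ 0 := by
            rw [← hBeq]; exact Nat.pos_iff_ne_zero.mp hBpos
          obtain ⟨j, hjm, hjne⟩ := Finset.exists_ne_zero_of_sum_ne_zero hne
          by_cases hjk : j < k
          · rw [if_pos hjk] at hjne; omega
          · rw [if_neg hjk] at hjne
            exact ⟨j, by omega, (Nat.mul_ne_zero_iff.mp hjne).2⟩
        have hmd : k ≤ st17m k d ∧ st17D d (st17m k d) ≠ 0 := Nat.sInf_mem hexd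
        have hme : k ≤ st17m k e ∧ st17D e (st17m k e) ≠ 0 := Nat.sInf_mem hexe
        have hmind : ∀ j, k ≤ j → st17D d j ≠ 0 → st17m k d ≤ j := fun j h1 h2 => Nat.sInf_le ⟨h1, h2⟩
        have hmine : ∀ j, k ≤ j → st17D e j ≠ 0 → st17m k e ≤ j := fun j h1 h2 => Nat.sInf_le ⟨h1, h2⟩
        rcases Nat.eq_or_lt_of_le hkl with hlk | hlk
        · -- ℓ = k : exactly one big part, of multiplicity 1
          have huniq : ∀ j, k ≤ j → st17D d j ≠ 0 → j = st17m k d := by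
            intro j h1 h2
            rcases lt_trichotomy j (st17m k d) with h | h | h
            · exact absurd (hmind j h1 h2) (by omega)
            · exact h
            · rcases st17_good_pair hk hdG hmd.1 h (by omega) with h4 | h4
              · exact absurd h4 hmd.2
              · exact absurd h4 h2
          have huniqe : ∀ j, k ≤ j → st17D e j ≠ 0 → j = st17m k e := by
            intro j h1 h2
            rcases lt_trichotomy j (st17m k e) with h | h | h
            · exact absurd (hmine j h1 h2) (by omega)
            · exact h
            · rcases st17_good_pair hk heG hme.1 h (by omega) with h4 | h4
              · exact absurd h4 hme.2
              · exact absurd h4 h2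
          have hD1d : st17D d (st17m k d) = 1 := by
            have := st17_good_diag hk (by omega) hdG hmd.1
            omega
          have hD1e : st17D e (st17m k e) = 1 := by
            have := st17_good_diag hk (by omega) heG hme.1
            omega
          have hmdn : st17m k d ≤ n := by
            by_contra hc
            exact hmd.2 (st17D_eq_zero hdw (by omega))
          have hmen : st17m k e ≤ n := by
            by_contra hc
            exact hme.2 (st17D_eq_zero hew (by omega))
          have hBd : (∑ j ∈ Finset.range (n + 1), if j < k then 0 else j * st17D d j)
              = st17m k d := by
            rw [Finset.sum_eq_single_of_mem (st17m k d) (Finset.mem_range.mpr (by omega))]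
            · rw [if_neg (by omega), hD1d, mul_one]
            · intro j hjr hne
              by_cases hjk : j < k
              · rw [if_pos hjk]
              · rw [if_neg hjk]
                by_cases hz : st17D d j = 0
                · rw [hz, mul_zero]
                · exact absurd (huniq j (by omega) hz) hne
          have hBe : (∑ j ∈ Finset.range (n + 1), if j < k then 0 else j * st17D e j)
              = st17m k e := by
            rw [Finset.sum_eq_single_of_mem (st17m k e) (Finset.mem_range.mpr (by omega))]
            · rw [if_neg (by omega), hD1e, mul_one]
            · intro j hjr hne
              by_cases hjk : j < k
              · rw [if_pos hjk]
              · rw [if_neg hjk]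
                by_cases hz : st17D e j = 0
                · rw [hz, mul_zero]
                · exact absurd (huniqe j (by omega) hz) hne
          have hmm : st17m k d = st17m k e := by rw [← hBd, ← hBe, hBeq]
          intro j
          rcases Nat.eq_zero_or_pos j with rfl | hj0
          · simp [st17D]
          rcases lt_or_ge j k with hjk | hjk
          · exact hsm j hj0 hjk
          · by_cases hz : st17D d j = 0
            · by_cases hz' : st17D e j = 0
              · rw [hz, hz']
              · have := huniqe j hjk hz'
                subst this
                rw [← hmm] at hz
                exact absurd hz hmd.2
            · have := huniq j hjk hz
              subst this
              rw [hD1d, hmm, hD1e]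
        · -- k < ℓ
          have hwind : ∀ j, k ≤ j → st17D d j ≠ 0 → st17m k d ≤ j ∧ j < st17m k d + (ℓ - k) := by
            intro j h1 h2
            refine ⟨hmind j h1 h2, ?_⟩
            by_contra hc
            rcases st17_good_pair hk hdG hmd.1 (show st17m k d < j by omega) (by omega) with h4 | h4
            · exact hmd.2 h4
            · exact h2 h4
          have hwine : ∀ j, k ≤ j → st17D e j ≠ 0 → st17m k e ≤ j ∧ j < st17m k e + (ℓ - k) := by
            intro j h1 h2
            refine ⟨hmine j h1 h2, ?_⟩
            by_contra hc
            rcases st17_good_pair hk heG hme.1 (show st17m k e < j by omega) (by omega) with h4 | h4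
            · exact hme.2 h4
            · exact h2 h4
          have hBd := st17_bigsum hk hlk hdw hdG hexd
          have hBe := st17_bigsum hk hlk hew heG hexe
          have hreq : (∑ o ∈ Finset.range (ℓ - k), st17D d (st17m k d + o))
              = ∑ o ∈ Finset.range (ℓ - k), st17D e (st17m k e + o) :=
            Finset.sum_congr rfl fun o ho => hbig o (Finset.mem_range.mp ho)
          have hteq : (∑ o ∈ Finset.range (ℓ - k), o * st17D d (st17m k d + o))
              = ∑ o ∈ Finset.range (ℓ - k), o * st17D e (st17m k e + o) :=
            Finset.sum_congr rfl fun o ho => by rw [hbig o (Finset.mem_range.mp ho)]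
          have hrpos : 0 < ∑ o ∈ Finset.range (ℓ - k), st17D d (st17m k d + o) := by
            rcases Nat.eq_zero_or_pos (∑ o ∈ Finset.range (ℓ - k), st17D d (st17m k d + o))
              with h0 | h0
            · have := (Finset.sum_eq_zero_iff.mp h0) 0 (Finset.mem_range.mpr (by omega))
              rw [add_zero] at this
              exact absurd this hmd.2
            · exact h0
          have hmm : st17m k d = st17m k e := by
            rw [hBd, hBe, hreq, hteq] at hBeq
            have hrpos2 : 0 < ∑ o ∈ Finset.range (ℓ - k), st17D e (st17m k e + o) := by
              rw [← hreq]; exact hrpos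
            exact Nat.eq_of_mul_eq_mul_right hrpos2 (by omega)
          intro j
          rcases Nat.eq_zero_or_pos j with rfl | hj0
          · simp [st17D]
          rcases lt_or_ge j k with hjk | hjk
          · exact hsm j hj0 hjk
          · by_cases hz : st17D d j = 0
            · by_cases hz' : st17D e j = 0
              · rw [hz, hz']
              · obtain ⟨hw1, hw2⟩ := hwine j hjk hz'
                have ho : j - st17m k e < ℓ - k := by omega
                have h5 := hbig (j - st17m k e) ho
                have e1 : st17m k e + (j - st17m k e) = j := by omega
                have e2 : st17m k d + (j - st17m k e) = j := by omega
                rw [e1, e2, hz] at h5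
                exact absurd h5.symm hz'
            · obtain ⟨hw1, hw2⟩ := hwind j hjk hz
              have ho : j - st17m k d < ℓ - k := by omega
              have h5 := hbig (j - st17m k d) ho
              have e1 : st17m k d + (j - st17m k d) = j := by omega
              have e2 : st17m k e + (j - st17m k d) = j := by
                rw [← hmm]; omega
              rw [e1, e2] at h5
              exact h5
    ext s
    have h6 := key (s : ℕ)
    rwa [st17D_apply, st17D_apply] at h6
  have hfin : G.Finite := Set.Finite.of_finite_image (Set.toFinite _) hinj
  refine ⟨hfin, ?_⟩
  rw [← Set.ncard_eq_toFinset_card _ hfin]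
  have h1 := Set.ncard_le_ncard_of_injOn Enc (fun a _ => Set.mem_univ (Enc a)) hinj
    Set.finite_univ
  rw [Set.ncard_univ] at h1
  have h2 : Nat.card ((Fin (k - 1) → Fin (n + 1)) × (Fin (ℓ - k) → Fin (n + 1)))
      = (n + 1) ^ (ℓ - 1) := by
    simp only [Nat.card_eq_fintype_card, Fintype.card_prod, Fintype.card_fun, Fintype.card_fin,
      ← pow_add]
    congr 1
    omega
  omega

/-- Let `1 ≤ k ≤ ℓ` and let `J(k,ℓ)` be the ideal of `F[x₁, x₂, …]` generated by the
monomials `x_i x_j` with `i ≥ k` and `j - i ≥ ℓ - k` (`i ≤ j`).  Grading by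
`d(x_i) = i`, the dimension of the degree-`n` component of `F[x₁, x₂, …]/J(k,ℓ)` is
`O(n^{ℓ-1})`. -/
theorem stmt17 {F : Type*} [Field F] (k ℓ : ℕ) (hk : 1 ≤ k) (hkl : k ≤ ℓ) :
    ∃ C : ℕ, ∀ n : ℕ, 1 ≤ n →
      Module.finrank F
        ((weightedHomogeneousSubmodule F (fun i : ℕ+ => (i : ℕ)) n).map
          (Ideal.Quotient.mkₐ F
            (Ideal.span {m : MvPolynomial ℕ+ F |
              ∃ i j : ℕ+, k ≤ (i : ℕ) ∧ i ≤ j ∧ ℓ - k ≤ (j : ℕ) - (i : ℕ) ∧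
                m = X i * X j})).toLinearMap) ≤ C * n ^ (ℓ - 1) := by
  classical
  refine ⟨2 ^ (ℓ - 1), fun n hn => ?_⟩
  set I := Ideal.span {m : MvPolynomial ℕ+ F |
      ∃ i j : ℕ+, k ≤ (i : ℕ) ∧ i ≤ j ∧ ℓ - k ≤ (j : ℕ) - (i : ℕ) ∧ m = X i * X j} with hI
  set f := (Ideal.Quotient.mkₐ F I).toLinearMap with hf
  obtain ⟨hfin, hcard⟩ := st17_count (k := k) (ℓ := ℓ) hk hkl n
  set T : Finset (MvPolynomial ℕ+ F ⧸ I) :=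
    hfin.toFinset.image (fun d => f ((monomial d) 1)) with hT
  have hmap : (weightedHomogeneousSubmodule F (fun i : ℕ+ => (i : ℕ)) n).map f
      ≤ Submodule.span F (T : Set (MvPolynomial ℕ+ F ⧸ I)) := by
    rw [weightedHomogeneousSubmodule_eq_finsupp_supported,
      AddMonoidAlgebra.supported_eq_span_single, Submodule.map_span]
    refine Submodule.span_le.mpr ?_
    rintro x ⟨p, ⟨dd, hdd, rfl⟩, rfl⟩
    simp only [single_eq_monomial]
    by_cases hg : st17Good k ℓ dd
    · apply Submodule.subset_span
      simp only [hT, Finset.coe_image, Set.mem_image, Finset.mem_coe]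
      exact ⟨dd, by rw [Set.Finite.mem_toFinset]; exact ⟨hdd, hg⟩, rfl⟩
    · have hbad : ∃ i j : ℕ+, k ≤ (i : ℕ) ∧ i ≤ j ∧ ℓ - k ≤ (j : ℕ) - (i : ℕ) ∧
          Finsupp.single i 1 + Finsupp.single j 1 ≤ dd := by
        unfold st17Good at hg
        push_neg at hg
        exact hg
      obtain ⟨i, j, h1, h2, h3, h4⟩ := hbad
      have hdd_eq : dd = Finsupp.single i 1 + (Finsupp.single j 1
          + (dd - (Finsupp.single i 1 + Finsupp.single j 1))) := by
        rw [← add_assoc, add_tsub_cancel_of_le h4]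
      have he : ((monomial dd) (1 : F) : MvPolynomial ℕ+ F)
          = (X i * X j) * monomial (dd - (Finsupp.single i 1 + Finsupp.single j 1)) 1 := by
        nth_rewrite 1 [hdd_eq]
        rw [monomial_single_add, monomial_single_add, pow_one, pow_one, mul_assoc]
      have hmem : ((monomial dd) (1 : F) : MvPolynomial ℕ+ F) ∈ I := by
        rw [he, hI]
        exact Ideal.mul_mem_right _ _ (Ideal.subset_span ⟨i, j, h1, h2, h3, rfl⟩)
      have hz : f ((monomial dd) (1 : F)) = 0 := by
        show Ideal.Quotient.mkₐ F I ((monomial dd) (1 : F)) = 0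
        rw [Ideal.Quotient.mkₐ_eq_mk]
        exact Ideal.Quotient.eq_zero_iff_mem.mpr hmem
      rw [hz]
      exact Submodule.zero_mem _
  have hfd : FiniteDimensional F (Submodule.span F (T : Set (MvPolynomial ℕ+ F ⧸ I))) :=
    inferInstance
  calc Module.finrank F ((weightedHomogeneousSubmodule F (fun i : ℕ+ => (i : ℕ)) n).map f)
      ≤ Module.finrank F (Submodule.span F (T : Set (MvPolynomial ℕ+ F ⧸ I))) :=
        Submodule.finrank_mono hmap
    _ ≤ T.card := finrank_span_finset_le_card T
    _ ≤ hfin.toFinset.card := Finset.card_image_le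
    _ ≤ (n + 1) ^ (ℓ - 1) := hcard
    _ ≤ 2 ^ (ℓ - 1) * n ^ (ℓ - 1) := by
        calc (n + 1) ^ (ℓ - 1) ≤ (2 * n) ^ (ℓ - 1) := Nat.pow_le_pow_left (by omega) _
          _ = 2 ^ (ℓ - 1) * n ^ (ℓ - 1) := mul_pow 2 n (ℓ - 1)
end

section
/- Let Γ = {(i, j) ∈ ℤ² : 1 ≤ i ≤ j} and let Σ be the subsemigroup of ℕ × ℕ generated by (0,1) and (3,3). If M ⊆ Γ is closed under addition by elements of Σ and contains the four elements γ + (0,1), γ + (1,5), γ + (2,4), γ + (3,3) for some γ ∈ Γ, then M contains γ + (0,4) + Γ. -/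
/-- Let `Γ = {(i,j) ∈ ℤ² : 1 ≤ i ≤ j}` and `Σ` the subsemigroup of `ℕ × ℕ` generated
by `(0,1)` and `(3,3)`.  If `M ⊆ Γ` is closed under adding elements of `Σ` and
contains `γ + (0,1)`, `γ + (1,5)`, `γ + (2,4)`, `γ + (3,3)` for some `γ ∈ Γ`, then
`M ⊇ γ + (0,4) + Γ`. -/
theorem stmt18 (Γ : Set (ℤ × ℤ)) (hΓ : Γ = {p : ℤ × ℤ | 1 ≤ p.1 ∧ p.1 ≤ p.2})
    (Sig : Set (ℤ × ℤ)) (hSig : Sig = {q : ℤ × ℤ | ∃ a b : ℕ, q = ((3 * b : ℤ), (a + 3 * b : ℤ))})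
    (M : Set (ℤ × ℤ)) (hMΓ : M ⊆ Γ) (hM : ∀ m ∈ M, ∀ s ∈ Sig, m + s ∈ M)
    (γ : ℤ × ℤ) (hγ : γ ∈ Γ)
    (h1 : γ + (0, 1) ∈ M) (h2 : γ + (1, 5) ∈ M) (h3 : γ + (2, 4) ∈ M)
    (h4 : γ + (3, 3) ∈ M) :
    ∀ g ∈ Γ, γ + (0, 4) + g ∈ M := by
  subst hΓ hSig
  rintro ⟨i, j⟩ ⟨hi1, hij⟩
  simp only [Set.mem_setOf_eq] at hi1 hij
  have hr : i % 3 = 0 ∨ i % 3 = 1 ∨ i % 3 = 2 := by omega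
  rcases hr with h | h | h
  · have hmem : γ + (0, 1) + ((i : ℤ), (j + 3 : ℤ)) ∈ M := by
      refine hM _ h1 _ ⟨(j + 3 - i).toNat, (i / 3).toNat, ?_⟩
      refine Prod.ext ?_ ?_ <;> simp <;> omega
    convert hmem using 1
    refine Prod.ext ?_ ?_ <;> simp <;> ring
  · have hmem : γ + (1, 5) + ((i - 1 : ℤ), (j - 1 : ℤ)) ∈ M := by
      refine hM _ h2 _ ⟨(j - i).toNat, ((i - 1) / 3).toNat, ?_⟩
      refine Prod.ext ?_ ?_ <;> simp <;> omega
    convert hmem using 1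
    refine Prod.ext ?_ ?_ <;> simp <;> ring
  · have hmem : γ + (2, 4) + ((i - 2 : ℤ), (j : ℤ)) ∈ M := by
      refine hM _ h3 _ ⟨(j - i + 2).toNat, ((i - 2) / 3).toNat, ?_⟩
      refine Prod.ext ?_ ?_ <;> simp <;> omega
    convert hmem using 1
    refine Prod.ext ?_ ?_ <;> simp <;> ring
end
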